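/- Let H ≤ G × G be a subspace with Goursat data E_X, E_Z, N_X, N_Z (defined by E_X = {x | ∃ z, (x,z) ∈ H}, E_Z = {z | ∃ x, (x,z) ∈ H}, N_X = {x | (x,0) ∈ H}, N_Z = {z | (0,z) ∈ H}), and let T = {x | ∃ z, (x,z) ∈ H ∩ H^ω} and W = {z | ∃ x, (x,z) ∈ H ∩ H^ω} be the external components of the stabilizer H ∩ H^ω. Say H has maximal stabilizer if T = E_X ∩ N_Z^θ and W = E_Z ∩ N_X^θ, and minimal stabilizer if T = N_X ∩ E_Z^θ and W = N_Z ∩ E_X^θ. Then H has both maximal and minimal stabilizer if and only if E_X = N_X and E_Z = N_Z (i.e., if and only if H is a direct product of two subspaces of G). -/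

import Mathlib

open Finset Module

/-- Orthogonal complement of a submodule with respect to a bilinear form:
`ortho ξ H = {v | ξ(v,h) = 0 for all h ∈ H}`. -/
def ortho {K V : Type*} [CommSemiring K] [AddCommMonoid V] [Module K V]
    (ξ : V →ₗ[K] V →ₗ[K] K) (H : Submodule K V) : Submodule K V :=
  ⨅ h ∈ H, LinearMap.ker (ξ.flip h)

/-- The dot product `θ(a,b) = ∑ j, a j * b j` as a bilinear form on `Fin n → ZMod p`. -/
def dotB (p n : ℕ) : (Fin n → ZMod p) →ₗ[ZMod p] (Fin n → ZMod p) →ₗ[ZMod p] ZMod p :=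
  LinearMap.mk₂ (ZMod p) (fun a b => ∑ j, a j * b j)
    (fun a a' b => by simp [add_mul, Finset.sum_add_distrib])
    (fun c a b => by simp [Finset.mul_sum, mul_assoc])
    (fun a b b' => by simp [mul_add, Finset.sum_add_distrib])
    (fun c a b => by simp [Finset.mul_sum, mul_left_comm])

/-- The symmetric form on `V × V` induced by a bilinear form `B` on `V`:
`(v,w) ↦ B v.1 w.1 + B v.2 w.2`. -/
def sumB {K V : Type*} [CommRing K] [AddCommGroup V] [Module K V]
    (B : V →ₗ[K] V →ₗ[K] K) : (V × V) →ₗ[K] (V × V) →ₗ[K] K :=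
  LinearMap.mk₂ K (fun v w => B v.1 w.1 + B v.2 w.2)
    (fun v v' w => by simp; ring)
    (fun c v w => by simp; ring)
    (fun v w w' => by simp; ring)
    (fun c v w => by simp; ring)

/-- The symplectic form on `V × V` induced by a symmetric bilinear form `B` on `V`:
`(v,w) ↦ B v.2 w.1 - B v.1 w.2`. -/
def sympB {K V : Type*} [CommRing K] [AddCommGroup V] [Module K V]
    (B : V →ₗ[K] V →ₗ[K] K) : (V × V) →ₗ[K] (V × V) →ₗ[K] K :=
  LinearMap.mk₂ K (fun v w => B v.2 w.1 - B v.1 w.2)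
    (fun v v' w => by simp; ring)
    (fun c v w => by simp; ring)
    (fun v w w' => by simp; ring)
    (fun c v w => by simp; ring)

lemma mem_ortho {K V : Type*} [CommSemiring K] [AddCommMonoid V] [Module K V]
    (ξ : V →ₗ[K] V →ₗ[K] K) {H : Submodule K V} {v : V} :
    v ∈ ortho ξ H ↔ ∀ h ∈ H, ξ v h = 0 := by
  simp [ortho]

lemma ortho_sup {K V : Type*} [CommSemiring K] [AddCommMonoid V] [Module K V]
    (ξ : V →ₗ[K] V →ₗ[K] K) (A B : Submodule K V) :
    ortho ξ (A ⊔ B) = ortho ξ A ⊓ ortho ξ B := by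
  ext v
  simp only [mem_ortho, Submodule.mem_inf]
  constructor
  · exact fun h => ⟨fun a ha => h a (Submodule.mem_sup_left ha),
      fun b hb => h b (Submodule.mem_sup_right hb)⟩
  · rintro ⟨h1, h2⟩ x hx
    rcases Submodule.mem_sup.1 hx with ⟨a, ha, b, hb, rfl⟩
    simp [map_add, h1 a ha, h2 b hb]

variable {p n : ℕ} [Fact p.Prime]

lemma dotB_comm (a b : Fin n → ZMod p) : dotB p n a b = dotB p n b a := by
  simp only [dotB, LinearMap.mk₂_apply]
  exact Finset.sum_congr rfl fun j _ => mul_comm _ _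

lemma dotB_refl : (dotB p n).IsRefl := fun a b h => by rw [dotB_comm]; exact h

lemma dotB_sepLeft : (dotB p n).SeparatingLeft := by
  intro a h
  funext j
  have := h (Pi.single j 1)
  simpa [dotB, Pi.single_apply, mul_ite] using this

lemma dotB_nondeg : LinearMap.BilinForm.Nondegenerate (dotB p n) :=
  (LinearMap.IsRefl.nondegenerate_iff_separatingLeft dotB_refl).2 fun a h => dotB_sepLeft a h

lemma ortho_eq (S : Submodule (ZMod p) (Fin n → ZMod p)) :
    ortho (dotB p n) S = LinearMap.BilinForm.orthogonal (dotB p n) S := by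
  ext v
  simp only [mem_ortho, LinearMap.BilinForm.mem_orthogonal_iff, LinearMap.BilinForm.IsOrtho]
  exact ⟨fun h s hs => by rw [← dotB_comm]; exact h s hs,
    fun h s hs => by rw [dotB_comm]; exact h s hs⟩

lemma finrank_ortho (S : Submodule (ZMod p) (Fin n → ZMod p)) :
    finrank (ZMod p) (ortho (dotB p n) S) = n - finrank (ZMod p) S := by
  rw [ortho_eq, LinearMap.BilinForm.finrank_orthogonal (dotB_nondeg (p:=p) (n:=n)),
    Module.finrank_fin_fun]

lemma ortho_ortho (S : Submodule (ZMod p) (Fin n → ZMod p)) :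
    ortho (dotB p n) (ortho (dotB p n) S) = S := by
  rw [ortho_eq, ortho_eq, LinearMap.BilinForm.orthogonal_orthogonal (dotB_nondeg (p:=p) (n:=n)) dotB_refl]

lemma dim_inf_ortho (A B : Submodule (ZMod p) (Fin n → ZMod p)) :
    finrank (ZMod p) ↥(A ⊓ ortho (dotB p n) B) + finrank (ZMod p) B
      = finrank (ZMod p) A + finrank (ZMod p) ↥(ortho (dotB p n) A ⊓ B) := by
  have e1 := Submodule.finrank_sup_add_finrank_inf_eq A (ortho (dotB p n) B)
  have e2 := finrank_ortho (p := p) B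
  have e2' : finrank (ZMod p) B ≤ n := (Submodule.finrank_le B).trans_eq (finrank_fin_fun _)
  have e3 : ortho (dotB p n) (A ⊔ ortho (dotB p n) B) = ortho (dotB p n) A ⊓ B := by
    rw [ortho_sup, ortho_ortho]
  have e4 := finrank_ortho (p := p) (A ⊔ ortho (dotB p n) B)
  have e5 : finrank (ZMod p) ↥(A ⊔ ortho (dotB p n) B) ≤ n :=
    (Submodule.finrank_le _).trans_eq (finrank_fin_fun _)
  rw [e3] at e4
  omega

abbrev Vec (p n : ℕ) := Fin n → ZMod p

lemma finrank_fst_inr (H : Submodule (ZMod p) ((Fin n → ZMod p) × (Fin n → ZMod p))) :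
    finrank (ZMod p) ↥(H.map (LinearMap.fst (ZMod p) _ _))
      + finrank (ZMod p) ↥(H.comap (LinearMap.inr (ZMod p) _ _))
      = finrank (ZMod p) ↥H := by
  have h := LinearMap.finrank_range_add_finrank_ker
    ((LinearMap.fst (ZMod p) (Vec p n) (Vec p n)).domRestrict H)
  rw [LinearMap.range_domRestrict] at h
  have e : (LinearMap.ker ((LinearMap.fst (ZMod p) (Vec p n)
      (Vec p n)).domRestrict H)) ≃ₗ[ZMod p]
      (H.comap (LinearMap.inr (ZMod p) (Vec p n) (Vec p n))) :=
    { toFun := fun x => ⟨(((x : ↥H) : Vec p n × Vec p n)).2, by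
        have hx : (((x : ↥H) : Vec p n × Vec p n)).1 = 0 := x.2
        have hm : (((x : ↥H) : Vec p n × Vec p n)) ∈ H := (x : ↥H).2
        simp only [Submodule.mem_comap, LinearMap.inr_apply]
        rw [← hx]
        exact hm⟩
      map_add' := fun x y => rfl
      map_smul' := fun c x => rfl
      invFun := fun z => ⟨⟨((0, (z : Vec p n)) : Vec p n × Vec p n),
        show (LinearMap.inr (ZMod p) (Vec p n) (Vec p n)) (z : Vec p n) ∈ H from z.2⟩, rfl⟩
      left_inv := fun x => by
        apply Subtype.ext; apply Subtype.ext
        exact Prod.ext ((show (((x : ↥H) : Vec p n × Vec p n)).1 = 0 from x.2)).symm rfl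
      right_inv := fun z => rfl }
  rw [← e.finrank_eq]
  exact h

lemma finrank_snd_inl (H : Submodule (ZMod p) ((Fin n → ZMod p) × (Fin n → ZMod p))) :
    finrank (ZMod p) ↥(H.map (LinearMap.snd (ZMod p) _ _))
      + finrank (ZMod p) ↥(H.comap (LinearMap.inl (ZMod p) _ _))
      = finrank (ZMod p) ↥H := by
  have h := LinearMap.finrank_range_add_finrank_ker
    ((LinearMap.snd (ZMod p) (Vec p n) (Vec p n)).domRestrict H)
  rw [LinearMap.range_domRestrict] at h
  have e : (LinearMap.ker ((LinearMap.snd (ZMod p) (Vec p n)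
      (Vec p n)).domRestrict H)) ≃ₗ[ZMod p]
      (H.comap (LinearMap.inl (ZMod p) (Vec p n) (Vec p n))) :=
    { toFun := fun x => ⟨(((x : ↥H) : Vec p n × Vec p n)).1, by
        have hx : (((x : ↥H) : Vec p n × Vec p n)).2 = 0 := x.2
        have hm : (((x : ↥H) : Vec p n × Vec p n)) ∈ H := (x : ↥H).2
        simp only [Submodule.mem_comap, LinearMap.inl_apply]
        rw [← hx]
        exact hm⟩
      map_add' := fun x y => rfl
      map_smul' := fun c x => rfl
      invFun := fun z => ⟨⟨(((z : Vec p n), 0) : Vec p n × Vec p n),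
        show (LinearMap.inl (ZMod p) (Vec p n) (Vec p n)) (z : Vec p n) ∈ H from z.2⟩, rfl⟩
      left_inv := fun x => by
        apply Subtype.ext; apply Subtype.ext
        exact Prod.ext rfl ((show (((x : ↥H) : Vec p n × Vec p n)).2 = 0 from x.2)).symm
      right_inv := fun z => rfl }
  rw [← e.finrank_eq]
  exact h

/-- for `H ≤ G × G` with Goursat data `E_X, E_Z, N_X, N_Z`, and
`T = {x | ∃ z, (x,z) ∈ H ∩ H^ω}`, `W = {z | ∃ x, (x,z) ∈ H ∩ H^ω}` the external components
of the stabilizer, `H` has both maximal stabilizer (`T = E_X ∩ N_Z^θ ∧ W = E_Z ∩ N_X^θ`)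
and minimal stabilizer (`T = N_X ∩ E_Z^θ ∧ W = N_Z ∩ E_X^θ`) iff `E_X = N_X ∧ E_Z = N_Z`. -/
theorem stmt15 (p n : ℕ) [Fact p.Prime]
    (H : Submodule (ZMod p) ((Fin n → ZMod p) × (Fin n → ZMod p))) :
    (((H ⊓ ortho (sympB (dotB p n)) H).map (LinearMap.fst (ZMod p) _ _)
        = H.map (LinearMap.fst (ZMod p) _ _)
            ⊓ ortho (dotB p n) (H.comap (LinearMap.inr (ZMod p) _ _)) ∧
      (H ⊓ ortho (sympB (dotB p n)) H).map (LinearMap.snd (ZMod p) _ _)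
        = H.map (LinearMap.snd (ZMod p) _ _)
            ⊓ ortho (dotB p n) (H.comap (LinearMap.inl (ZMod p) _ _))) ∧
     ((H ⊓ ortho (sympB (dotB p n)) H).map (LinearMap.fst (ZMod p) _ _)
        = H.comap (LinearMap.inl (ZMod p) _ _)
            ⊓ ortho (dotB p n) (H.map (LinearMap.snd (ZMod p) _ _)) ∧
      (H ⊓ ortho (sympB (dotB p n)) H).map (LinearMap.snd (ZMod p) _ _)
        = H.comap (LinearMap.inr (ZMod p) _ _)
            ⊓ ortho (dotB p n) (H.map (LinearMap.fst (ZMod p) _ _))))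
    ↔ (H.map (LinearMap.fst (ZMod p) _ _) = H.comap (LinearMap.inl (ZMod p) _ _) ∧
       H.map (LinearMap.snd (ZMod p) _ _) = H.comap (LinearMap.inr (ZMod p) _ _)) := by
  have hNXle : H.comap (LinearMap.inl (ZMod p) _ _) ≤ H.map (LinearMap.fst (ZMod p) _ _) :=
    fun x hx => Submodule.mem_map.2 ⟨(x, 0), hx, rfl⟩
  have hNZle : H.comap (LinearMap.inr (ZMod p) _ _) ≤ H.map (LinearMap.snd (ZMod p) _ _) :=
    fun x hx => Submodule.mem_map.2 ⟨(0, x), hx, rfl⟩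
  have hlowT : H.comap (LinearMap.inl (ZMod p) _ _)
      ⊓ ortho (dotB p n) (H.map (LinearMap.snd (ZMod p) _ _))
      ≤ (H ⊓ ortho (sympB (dotB p n)) H).map (LinearMap.fst (ZMod p) _ _) := by
    rintro x ⟨hx1, hx2⟩
    refine Submodule.mem_map.2 ⟨(x, 0), Submodule.mem_inf.2 ⟨hx1, ?_⟩, rfl⟩
    rw [mem_ortho]
    intro h hh
    have h0 := (mem_ortho (dotB p n)).1 hx2 h.2 (Submodule.mem_map.2 ⟨h, hh, rfl⟩)
    simp [sympB, h0]
  have hlowW : H.comap (LinearMap.inr (ZMod p) _ _)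
      ⊓ ortho (dotB p n) (H.map (LinearMap.fst (ZMod p) _ _))
      ≤ (H ⊓ ortho (sympB (dotB p n)) H).map (LinearMap.snd (ZMod p) _ _) := by
    rintro x ⟨hx1, hx2⟩
    refine Submodule.mem_map.2 ⟨(0, x), Submodule.mem_inf.2 ⟨hx1, ?_⟩, rfl⟩
    rw [mem_ortho]
    intro h hh
    have h0 := (mem_ortho (dotB p n)).1 hx2 h.1 (Submodule.mem_map.2 ⟨h, hh, rfl⟩)
    simp [sympB, h0]
  have hupT : (H ⊓ ortho (sympB (dotB p n)) H).map (LinearMap.fst (ZMod p) _ _)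
      ≤ H.map (LinearMap.fst (ZMod p) _ _)
        ⊓ ortho (dotB p n) (H.comap (LinearMap.inr (ZMod p) _ _)) := by
    rintro x hx
    obtain ⟨v, hv, rfl⟩ := Submodule.mem_map.1 hx
    have hv' := Submodule.mem_inf.1 hv
    refine Submodule.mem_inf.2 ⟨Submodule.mem_map.2 ⟨v, hv'.1, rfl⟩, ?_⟩
    rw [mem_ortho]
    intro u hu
    have h2 := (mem_ortho (sympB (dotB p n))).1 hv'.2 (0, u) hu
    simpa [sympB] using h2
  have hupW : (H ⊓ ortho (sympB (dotB p n)) H).map (LinearMap.snd (ZMod p) _ _)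
      ≤ H.map (LinearMap.snd (ZMod p) _ _)
        ⊓ ortho (dotB p n) (H.comap (LinearMap.inl (ZMod p) _ _)) := by
    rintro x hx
    obtain ⟨v, hv, rfl⟩ := Submodule.mem_map.1 hx
    have hv' := Submodule.mem_inf.1 hv
    refine Submodule.mem_inf.2 ⟨Submodule.mem_map.2 ⟨v, hv'.1, rfl⟩, ?_⟩
    rw [mem_ortho]
    intro u hu
    have h2 := (mem_ortho (sympB (dotB p n))).1 hv'.2 (u, 0) hu
    simpa [sympB, sub_eq_zero] using h2
  constructor
  · rintro ⟨⟨h1, h2⟩, h3, h4⟩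
    have d1 := dim_inf_ortho (H.map (LinearMap.fst (ZMod p) _ _))
      (H.comap (LinearMap.inr (ZMod p) _ _))
    have d2 := dim_inf_ortho (H.comap (LinearMap.inl (ZMod p) _ _))
      (H.map (LinearMap.snd (ZMod p) _ _))
    rw [← h1] at d1
    rw [← h3] at d2
    have e1 : ortho (dotB p n) (H.map (LinearMap.fst (ZMod p) _ _))
        ⊓ H.comap (LinearMap.inr (ZMod p) _ _)
        = (H ⊓ ortho (sympB (dotB p n)) H).map (LinearMap.snd (ZMod p) _ _) := by
      rw [h4, inf_comm]
    have e2 : ortho (dotB p n) (H.comap (LinearMap.inl (ZMod p) _ _))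
        ⊓ H.map (LinearMap.snd (ZMod p) _ _)
        = (H ⊓ ortho (sympB (dotB p n)) H).map (LinearMap.snd (ZMod p) _ _) := by
      rw [h2, inf_comm]
    rw [e1] at d1
    rw [e2] at d2
    have d3 := finrank_fst_inr H
    have d4 := finrank_snd_inl H
    have hXr : finrank (ZMod p) ↥(H.comap (LinearMap.inl (ZMod p) _ _))
        = finrank (ZMod p) ↥(H.map (LinearMap.fst (ZMod p) _ _)) := by omega
    have hZr : finrank (ZMod p) ↥(H.comap (LinearMap.inr (ZMod p) _ _))
        = finrank (ZMod p) ↥(H.map (LinearMap.snd (ZMod p) _ _)) := by omega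
    exact ⟨(Submodule.eq_of_le_of_finrank_eq hNXle hXr).symm,
      (Submodule.eq_of_le_of_finrank_eq hNZle hZr).symm⟩
  · rintro ⟨hX, hZ⟩
    refine ⟨⟨le_antisymm hupT ?_, le_antisymm hupW ?_⟩,
      ⟨le_antisymm ?_ hlowT, le_antisymm ?_ hlowW⟩⟩
    · rw [hX, ← hZ]; exact hlowT
    · rw [hZ, ← hX]; exact hlowW
    · rw [← hX, hZ]; exact hupT
    · rw [← hZ, hX]; exact hupW
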